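/- If H is a 5-Ore graph and v ∈ V(H), then there exists either an Ore-collapsible subset of H not containing v or an emerald of H not containing v. -/

import Mathlib

open SimpleGraph

namespace Postle

noncomputable def epsC : ℝ := 1 / 21
noncomputable def delC : ℝ := 8 / 21
noncomputable def PC : ℝ := 48 / 21
noncomputable def QC : ℝ := 8 / 21

/-- The degree of a vertex, via the cardinality of its neighbor set. -/
noncomputable def degS {V : Type} (G : SimpleGraph V) (v : V) : ℕ :=
  (G.neighborSet v).ncard

/-- A graph is 5-critical if it is not 4-colorable but every proper subgraph is. -/
def FiveCritical {V : Type} (G : SimpleGraph V) : Prop :=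
  ¬ G.Colorable 4 ∧ ∀ H : SimpleGraph V, H < G → H.Colorable 4

/-- `G` is (isomorphic to) the complete graph `K₅`. -/
def IsK5 {V : Type} (G : SimpleGraph V) : Prop :=
  Nonempty (G ≃g (⊤ : SimpleGraph (Fin 5)))

/-- `T(G)`: the maximum, over collections of pairwise disjoint cliques of size 3 or 4 in `G`,
of (number of 3-cliques) + 2 * (number of 4-cliques); each clique of size `k` contributes
`k - 2`. -/
noncomputable def TT {V : Type} (G : SimpleGraph V) : ℕ :=
  sSup { n : ℕ | ∃ C : Finset (Finset V),
    ((C : Set (Finset V)).Pairwise fun A B => Disjoint A B) ∧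
    (∀ W ∈ C, G.IsClique (W : Set V) ∧ (W.card = 3 ∨ W.card = 4)) ∧
    n = ∑ W ∈ C, (W.card - 2) }

/-- The potential `p(G) = (9+ε)|V(G)| - 4|E(G)| - δ·T(G)` with `ε = 1/21`, `δ = 8/21`. -/
noncomputable def pot {V : Type} (G : SimpleGraph V) : ℝ :=
  (9 + epsC) * (Nat.card V : ℝ) - 4 * (G.edgeSet.ncard : ℝ) - delC * (TT G : ℝ)

/-- `p_G(R) = p(G[R])`. -/
noncomputable def potOn {V : Type} (G : SimpleGraph V) (R : Set V) : ℝ :=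
  pot (G.induce R)

/-- The Kostochka–Yancey potential `p_KY(G) = 9|V(G)| - 4|E(G)|`. -/
noncomputable def potKY {V : Type} (G : SimpleGraph V) : ℝ :=
  9 * (Nat.card V : ℝ) - 4 * (G.edgeSet.ncard : ℝ)

noncomputable def potKYOn {V : Type} (G : SimpleGraph V) (R : Set V) : ℝ :=
  potKY (G.induce R)

/-- `G` is an Ore-composition of `G₁` (the edge side, with replaced edge `xy`) and `G₂`
(the vertex side, with split vertex `z`): delete the edge `xy` of `G₁`, split `z` into two
vertices of positive degree, and identify them with `x` and `y`. The set `S` records which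
neighbors of `z` get attached to `x`. -/
def IsOreComposition {V V₁ V₂ : Type} (G : SimpleGraph V)
    (G₁ : SimpleGraph V₁) (G₂ : SimpleGraph V₂) : Prop :=
  ∃ (x y : V₁) (z : V₂) (f₁ : V₁ ↪ V) (f₂ : {w : V₂ // w ≠ z} ↪ V) (S : Set V₂),
    G₁.Adj x y ∧
    (∀ w ∈ S, G₂.Adj z w) ∧ S.Nonempty ∧ (G₂.neighborSet z \ S).Nonempty ∧
    Set.range ⇑f₁ ∩ Set.range ⇑f₂ = ∅ ∧
    Set.range ⇑f₁ ∪ Set.range ⇑f₂ = Set.univ ∧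
    ∀ a b : V, G.Adj a b ↔
      ((∃ a' b' : V₁, f₁ a' = a ∧ f₁ b' = b ∧ G₁.Adj a' b' ∧
          ¬(a' = x ∧ b' = y) ∧ ¬(a' = y ∧ b' = x)) ∨
       (∃ a' b' : {w : V₂ // w ≠ z}, f₂ a' = a ∧ f₂ b' = b ∧ G₂.Adj a'.1 b'.1) ∨
       (∃ w : {w : V₂ // w ≠ z}, G₂.Adj z w.1 ∧
         ((((a = f₁ x ∧ b = f₂ w) ∨ (b = f₁ x ∧ a = f₂ w)) ∧ w.1 ∈ S) ∨
          (((a = f₁ y ∧ b = f₂ w) ∨ (b = f₁ y ∧ a = f₂ w)) ∧ w.1 ∉ S))))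

/-- A graph is 5-Ore if it can be obtained from copies of `K₅` by repeated Ore-compositions. -/
inductive Is5Ore : {V : Type} → SimpleGraph V → Prop
  | k5 {V : Type} {G : SimpleGraph V} (h : IsK5 G) : Is5Ore G
  | ore {V V₁ V₂ : Type} {G : SimpleGraph V} {G₁ : SimpleGraph V₁} {G₂ : SimpleGraph V₂}
      (h₁ : Is5Ore G₁) (h₂ : Is5Ore G₂) (h : IsOreComposition G G₁ G₂) : Is5Ore G

/-- The boundary of `R`: the vertices of `R` with a neighbor outside `R`. -/
def boundary {V : Type} (G : SimpleGraph V) (R : Set V) : Set V :=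
  {v : V | v ∈ R ∧ ∃ w, w ∉ R ∧ G.Adj v w}

/-- The graph `G + uv` obtained by adding the edge `uv`. -/
noncomputable def addEdge {α : Type} (G : SimpleGraph α) (u v : α) : SimpleGraph α :=
  G ⊔ SimpleGraph.fromEdgeSet {s(u, v)}

/-- `R` is an Ore-collapsible subset of `G`: a proper subset whose boundary consists of exactly
two non-adjacent vertices `u, v` such that `G[R] + uv` is 5-Ore. -/
def OreCollapsible {V : Type} (G : SimpleGraph V) (R : Set V) : Prop :=
  R ≠ Set.univ ∧ ∃ u v : ↥R, u.1 ≠ v.1 ∧ ¬ G.Adj u.1 v.1 ∧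
    boundary G R = {u.1, v.1} ∧ Is5Ore (addEdge (G.induce R) u v)

/-- An emerald: a subgraph isomorphic to `K₄` all of whose vertices have degree 4 in `G`,
given by its vertex set. -/
def IsEmerald {V : Type} (G : SimpleGraph V) (S : Set V) : Prop :=
  S.ncard = 4 ∧ (∀ a ∈ S, ∀ b ∈ S, a ≠ b → G.Adj a b) ∧ ∀ v ∈ S, degS G v = 4

/-- A diamond: a subgraph isomorphic to `K₅ - e` in which the vertices not incident to `e`
have degree 4 in `G`, given by its vertex set. -/
def IsDiamond {V : Type} (G : SimpleGraph V) (D : Set V) : Prop :=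
  D.ncard = 5 ∧ ∃ u ∈ D, ∃ v ∈ D, u ≠ v ∧
    (∀ a ∈ D, ∀ b ∈ D, a ≠ b → ¬(a = u ∧ b = v) → ¬(a = v ∧ b = u) → G.Adj a b) ∧
    ∀ w ∈ D, w ≠ u → w ≠ v → degS G w = 4

/-- A graph is ungemmed if it contains neither a diamond nor an emerald. -/
def Ungemmed {V : Type} (G : SimpleGraph V) : Prop :=
  (¬ ∃ D : Set V, IsDiamond G D) ∧ ¬ ∃ S : Set V, IsEmerald G S

/-- `R` is collapsible: a proper subset with `|R| ≥ 5` such that in every proper 4-coloring of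
`G[R]` all boundary vertices of `R` receive the same color. -/
def Collapsible {V : Type} (G : SimpleGraph V) (R : Set V) : Prop :=
  R ≠ Set.univ ∧ 5 ≤ R.ncard ∧
    ∀ φ : (G.induce R).Coloring (Fin 4), ∀ u v : ↥R,
      u.1 ∈ boundary G R → v.1 ∈ boundary G R → φ u = φ v

/-- The critical complement of a collapsible set `R`: identify the boundary of `R` to a single
new vertex (`none`) and delete the rest of `R`. -/
noncomputable def criticalComplement {V : Type} (G : SimpleGraph V) (R : Set V) :
    SimpleGraph (Option ↥(Rᶜ)) :=
  SimpleGraph.fromRel fun a b =>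
    match a, b with
    | some w, some w' => G.Adj w.1 w'.1
    | none, some w => ∃ x ∈ boundary G R, G.Adj x w.1
    | _, _ => False

/-- The φ-identification `G_φ(R)`: vertices outside `R` together with four vertices `x_i`;
the vertices of `R` colored `i` are identified to `x_i`, and all edges `x_i x_j` are added. -/
noncomputable def phiIdent {V : Type} (G : SimpleGraph V) (R : Set V) (φ : ↥R → Fin 4) :
    SimpleGraph ((↥(Rᶜ)) ⊕ Fin 4) :=
  SimpleGraph.fromRel fun a b =>
    match a, b with
    | Sum.inl w, Sum.inl w' => G.Adj w.1 w'.1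
    | Sum.inl w, Sum.inr i => ∃ r : ↥R, φ r = i ∧ G.Adj r.1 w.1
    | Sum.inr _, Sum.inr _ => True
    | _, _ => False

/-- A critical extension of `R` in `G`: a proper 4-coloring `φ` of `G[R]` together with a
5-critical subgraph `W` of the φ-identification `G_φ(R)`, with vertex set `S`. -/
structure CriticalExtension {V : Type} (G : SimpleGraph V) (R : Set V) where
  φ : (G.induce R).Coloring (Fin 4)
  S : Set ((↥(Rᶜ)) ⊕ Fin 4)
  W : SimpleGraph ↥S
  le : W ≤ (phiIdent G R ⇑φ).induce S
  crit : FiveCritical W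

/-- The critical extension `R' = (V(W) - V(X)) ∪ R` of `R`. -/
noncomputable def CriticalExtension.verts {V : Type} {G : SimpleGraph V} {R : Set V}
    (E : CriticalExtension G R) : Set V :=
  R ∪ {v : V | ∃ h : v ∈ Rᶜ, Sum.inl (⟨v, h⟩ : ↥(Rᶜ)) ∈ E.S}

/-- The size `|X|` of the core `W ∩ X` of the extension. -/
noncomputable def CriticalExtension.coreCard {V : Type} {G : SimpleGraph V} {R : Set V}
    (E : CriticalExtension G R) : ℕ :=
  {i : Fin 4 | Sum.inr i ∈ E.S}.ncard

/-- The graph `W - X` obtained from the extender `W` by deleting the core vertices. -/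
noncomputable def CriticalExtension.WminusX {V : Type} {G : SimpleGraph V} {R : Set V}
    (E : CriticalExtension G R) :=
  E.W.induce {w : ↥E.S | w.1.isLeft = true}

/-- `f(n) = (9+ε)n - 4·C(n,2)`. -/
noncomputable def fExt (n : ℕ) : ℝ := (9 + epsC) * (n : ℝ) - 4 * ((n.choose 2 : ℕ) : ℝ)

/-- The closed neighborhood of a vertex. -/
def closedNbhd {V : Type} (G : SimpleGraph V) (v : V) : Set V :=
  insert v (G.neighborSet v)

/-- A cluster: a maximal set of degree-four vertices with the same closed neighborhood. -/
def IsCluster {V : Type} (G : SimpleGraph V) (C : Set V) : Prop :=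
  C.Nonempty ∧ (∀ v ∈ C, degS G v = 4) ∧
  (∀ u ∈ C, ∀ v ∈ C, closedNbhd G u = closedNbhd G v) ∧
  ∀ C' : Set V, C ⊆ C' → (∀ v ∈ C', degS G v = 4) →
    (∀ u ∈ C', ∀ v ∈ C', closedNbhd G u = closedNbhd G v) → C' = C

open Classical in
/-- The list of cluster sizes of `G`, in decreasing order. -/
noncomputable def clusterList {V : Type} [Fintype V] (G : SimpleGraph V) : List ℕ :=
  ((((Finset.univ : Finset V).filter fun v => degS G v = 4).image
      fun v => (Finset.univ : Finset V).filter
        fun u => degS G u = 4 ∧ closedNbhd G u = closedNbhd G v).val.map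
    Finset.card).sort (· ≤ ·) |>.reverse

/-- `H` is smaller than `G`: fewer vertices; or the same number of vertices and more edges; or
the same number of vertices and edges and `H` precedes `G` in the lexicographic ordering of
cluster sizes listed in decreasing order. -/
def Smaller {V₁ V₂ : Type} [Fintype V₁] [Fintype V₂]
    (H : SimpleGraph V₁) (G : SimpleGraph V₂) : Prop :=
  Nat.card V₁ < Nat.card V₂ ∨
  (Nat.card V₁ = Nat.card V₂ ∧ G.edgeSet.ncard < H.edgeSet.ncard) ∨
  (Nat.card V₁ = Nat.card V₂ ∧ H.edgeSet.ncard = G.edgeSet.ncard ∧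
    List.Lex (· > ·) (clusterList H) (clusterList G))

/-- A 5-critical graph `G` is good if every smaller 5-critical graph satisfies the conclusion
of the main theorem. -/
def Good {V : Type} [Fintype V] (G : SimpleGraph V) : Prop :=
  FiveCritical G ∧
    ∀ (V' : Type) [Fintype V'] (H : SimpleGraph V'), FiveCritical H → Smaller H G →
      (IsK5 H → pot H = 5 + 5 * epsC - 2 * delC) ∧
      (Is5Ore H → ¬ IsK5 H →
        pot H ≤ 5 + (Nat.card V' : ℝ) * epsC - (2 + ((Nat.card V' : ℝ) - 1) / 4) * delC) ∧
      (¬ Is5Ore H → pot H ≤ 5 - PC)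

/-- `G` is tight if it is good and `p(G) ≥ 5 - P - Q`. -/
def Tight {V : Type} [Fintype V] (G : SimpleGraph V) : Prop :=
  Good G ∧ pot G ≥ 5 - PC - QC

/-- `u, v` is an identifiable pair in a proper subset `R`: `G[R] + uv` is not 4-colorable. -/
def IdentifiablePair {V : Type} (G : SimpleGraph V) (R : Set V) (u v : ↥R) : Prop :=
  R ≠ Set.univ ∧ ¬ (addEdge (G.induce R) u v).Colorable 4

theorem isOreComposition_of_iso {V V' V₁ V₂ : Type} {G : SimpleGraph V} {G' : SimpleGraph V'}
    {G₁ : SimpleGraph V₁} {G₂ : SimpleGraph V₂} (e : G ≃g G')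
    (h : IsOreComposition G G₁ G₂) : IsOreComposition G' G₁ G₂ := by
  obtain ⟨x, y, z, f₁, f₂, S, hxy, hS, hSne, hNS, hdisj, hcover, hadj⟩ := h
  set ee := e.toEquiv with hee
  refine ⟨x, y, z, f₁.trans ee.toEmbedding, f₂.trans ee.toEmbedding, S, hxy, hS, hSne, hNS,
    ?_, ?_, ?_⟩
  · have c1 : ⇑(f₁.trans ee.toEmbedding) = ⇑ee ∘ ⇑f₁ := rfl
    have c2 : ⇑(f₂.trans ee.toEmbedding) = ⇑ee ∘ ⇑f₂ := rfl
    rw [c1, c2, Set.range_comp, Set.range_comp, ← Set.image_inter ee.injective, hdisj,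
      Set.image_empty]
  · have c1 : ⇑(f₁.trans ee.toEmbedding) = ⇑ee ∘ ⇑f₁ := rfl
    have c2 : ⇑(f₂.trans ee.toEmbedding) = ⇑ee ∘ ⇑f₂ := rfl
    rw [c1, c2, Set.range_comp, Set.range_comp, ← Set.image_union, hcover, Set.image_univ,
      Equiv.range_eq_univ]
  · intro a b
    have h0 : G'.Adj a b ↔ G.Adj (ee.symm a) (ee.symm b) := by
      conv_lhs => rw [show a = e (ee.symm a) from (ee.apply_symm_apply a).symm,
        show b = e (ee.symm b) from (ee.apply_symm_apply b).symm]
      exact e.map_adj_iff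
    rw [h0, hadj (ee.symm a) (ee.symm b)]
    simp only [Equiv.eq_symm_apply, Equiv.symm_apply_eq, Function.Embedding.trans_apply,
      Equiv.coe_toEmbedding, Equiv.toEmbedding_apply]

theorem is5Ore_of_iso : ∀ {V : Type} {G : SimpleGraph V}, Is5Ore G →
    ∀ {V' : Type} {G' : SimpleGraph V'}, (G ≃g G') → Is5Ore G' := by
  intro V G h
  induction h with
  | k5 h => exact fun e => Is5Ore.k5 ⟨RelIso.trans e.symm h.some⟩
  | ore h₁ h₂ h ih₁ ih₂ => exact fun e => Is5Ore.ore h₁ h₂ (isOreComposition_of_iso e h)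

theorem stmt4_aux : ∀ {V : Type} {H : SimpleGraph V}, Is5Ore H → ∀ v : V,
    (∃ R : Set V, OreCollapsible H R ∧ v ∉ R) ∨
    (∃ S : Set V, IsEmerald H S ∧ v ∉ S) := by
  intro V H h5
  induction h5 with
  | @k5 V H h =>
    intro v
    obtain ⟨e⟩ := h
    right
    haveI : Finite V := Finite.of_equiv (Fin 5) e.toEquiv.symm
    have hadjall : ∀ a b : V, a ≠ b → H.Adj a b := by
      intro a b hab
      have : (⊤ : SimpleGraph (Fin 5)).Adj (e a) (e b) := by
        simp only [top_adj]
        exact fun h' => hab (e.toEquiv.injective h')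
      exact e.map_adj_iff.mp this
    have hcardV : Nat.card V = 5 := by
      rw [Nat.card_congr e.toEquiv, Nat.card_eq_fintype_card, Fintype.card_fin]
    have hcompl : ∀ w : V, ({w}ᶜ : Set V).ncard = 4 := by
      intro w
      rw [Set.compl_eq_univ_diff, Set.ncard_diff_singleton_of_mem (Set.mem_univ w),
        Set.ncard_univ, hcardV]
    have hnb : ∀ w : V, H.neighborSet w = {w}ᶜ := by
      intro w; ext u
      simp only [SimpleGraph.mem_neighborSet, Set.mem_compl_iff, Set.mem_singleton_iff]
      constructor
      · intro h' h''; exact H.loopless.irrefl w (by rw [h''] at h'; exact h'.symm)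
      · intro h'; exact hadjall w u (fun h'' => h' h''.symm)
    refine ⟨{v}ᶜ, ⟨hcompl v, fun a _ b _ hab => hadjall a b hab, fun w _ => ?_⟩, fun h' => h' rfl⟩
    show (H.neighborSet w).ncard = 4
    rw [hnb w]; exact hcompl w
  | @ore V V₁ V₂ H G₁ G₂ h₁ h₂ hcomp ih₁ ih₂ =>
    intro v
    obtain ⟨x, y, z, f₁, f₂, S, hxy, hS, hSne, hNS, hdisj, hcover, hadj⟩ := hcomp
    have hf₂ : Function.Injective ⇑f₂ := f₂.injective
    have hner : ∀ (a : V₁) (w : {w : V₂ // w ≠ z}), f₁ a ≠ f₂ w := by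
      intro a w h
      have : f₁ a ∈ Set.range ⇑f₁ ∩ Set.range ⇑f₂ := ⟨⟨a, rfl⟩, ⟨w, h.symm⟩⟩
      rw [hdisj] at this; exact this
    have hmem : ∀ c : V, (∃ a, f₁ a = c) ∨ (∃ w, f₂ w = c) := by
      intro c
      have : c ∈ Set.range ⇑f₁ ∪ Set.range ⇑f₂ := by rw [hcover]; exact Set.mem_univ c
      exact this
    have L1 : ∀ a b : V₁, H.Adj (f₁ a) (f₁ b) ↔
        (G₁.Adj a b ∧ ¬(a = x ∧ b = y) ∧ ¬(a = y ∧ b = x)) := by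
      intro a b
      rw [hadj]
      constructor
      · rintro (⟨a', b', ha, hb, h1, h2, h3⟩ | ⟨a', b', ha, hb, h1⟩ |
          ⟨w, hzw, (⟨(⟨ha, hb⟩ | ⟨hb, ha⟩), _⟩ | ⟨(⟨ha, hb⟩ | ⟨hb, ha⟩), _⟩)⟩)
        · obtain rfl := f₁.injective ha; obtain rfl := f₁.injective hb; exact ⟨h1, h2, h3⟩
        · exact absurd ha.symm (hner a a')
        · exact absurd hb (hner b w)
        · exact absurd ha (hner a w)
        · exact absurd hb (hner b w)
        · exact absurd ha (hner a w)
      · rintro ⟨h1, h2, h3⟩; exact Or.inl ⟨a, b, rfl, rfl, h1, h2, h3⟩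
    have L2 : ∀ w w' : {w : V₂ // w ≠ z}, H.Adj (f₂ w) (f₂ w') ↔ G₂.Adj w.1 w'.1 := by
      intro w w'
      rw [hadj]
      constructor
      · rintro (⟨a', b', ha, hb, h1, h2, h3⟩ | ⟨a', b', ha, hb, h1⟩ |
          ⟨w'', hzw, (⟨(⟨ha, hb⟩ | ⟨hb, ha⟩), _⟩ | ⟨(⟨ha, hb⟩ | ⟨hb, ha⟩), _⟩)⟩)
        · exact absurd ha (hner a' w)
        · obtain rfl := hf₂ ha; obtain rfl := hf₂ hb; exact h1
        · exact absurd ha.symm (hner x w)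
        · exact absurd hb.symm (hner x w')
        · exact absurd ha.symm (hner y w)
        · exact absurd hb.symm (hner y w')
      · intro h; exact Or.inr (Or.inl ⟨w, w', rfl, rfl, h⟩)
    have L3 : ∀ (a : V₁) (w : {w : V₂ // w ≠ z}), H.Adj (f₁ a) (f₂ w) ↔
        (G₂.Adj z w.1 ∧ ((a = x ∧ w.1 ∈ S) ∨ (a = y ∧ w.1 ∉ S))) := by
      intro a w
      rw [hadj]
      constructor
      · rintro (⟨a', b', ha, hb, h1, h2, h3⟩ | ⟨a', b', ha, hb, h1⟩ |
          ⟨w'', hzw, (⟨(⟨ha, hb⟩ | ⟨hb, ha⟩), hs⟩ | ⟨(⟨ha, hb⟩ | ⟨hb, ha⟩), hs⟩)⟩)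
        · exact absurd hb (hner b' w)
        · exact absurd ha.symm (hner a a')
        · obtain rfl := hf₂ hb
          exact ⟨hzw, Or.inl ⟨f₁.injective ha, hs⟩⟩
        · exact absurd ha (hner a w'')
        · obtain rfl := hf₂ hb
          exact ⟨hzw, Or.inr ⟨f₁.injective ha, hs⟩⟩
        · exact absurd ha (hner a w'')
      · rintro ⟨hzw, (⟨rfl, hs⟩ | ⟨rfl, hs⟩)⟩
        · exact Or.inr (Or.inr ⟨w, hzw, Or.inl ⟨Or.inl ⟨rfl, rfl⟩, hs⟩⟩)
        · exact Or.inr (Or.inr ⟨w, hzw, Or.inr ⟨Or.inl ⟨rfl, rfl⟩, hs⟩⟩)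
    -- degree transfer
    have L4 : ∀ w : {w : V₂ // w ≠ z}, degS H (f₂ w) = degS G₂ w.1 := by
      intro w
      classical
      set g : V₂ → V :=
        fun w' => if h : w' = z then (if w.1 ∈ S then f₁ x else f₁ y) else f₂ ⟨w', h⟩ with hg
      have hgz : g z = if w.1 ∈ S then f₁ x else f₁ y := by simp [hg]
      have hgnz : ∀ (w' : V₂) (h : w' ≠ z), g w' = f₂ ⟨w', h⟩ := by
        intro w' h; simp [hg, h]
      have hgr : ∀ (w' : V₂) (h : w' ≠ z) (a : V₁), g w' ≠ f₁ a := by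
        intro w' h a hh
        rw [hgnz w' h] at hh
        exact hner a ⟨w', h⟩ hh.symm
      have hinj : Set.InjOn g (G₂.neighborSet w.1) := by
        intro a _ b _ hab
        by_cases haz : a = z <;> by_cases hbz : b = z
        · rw [haz, hbz]
        · exfalso
          rw [haz, hgz] at hab
          by_cases hws : w.1 ∈ S
          · rw [if_pos hws] at hab; exact hgr b hbz x hab.symm
          · rw [if_neg hws] at hab; exact hgr b hbz y hab.symm
        · exfalso
          rw [hbz, hgz] at hab
          by_cases hws : w.1 ∈ S
          · rw [if_pos hws] at hab; exact hgr a haz x hab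
          · rw [if_neg hws] at hab; exact hgr a haz y hab
        · rw [hgnz a haz, hgnz b hbz] at hab
          exact congrArg Subtype.val (hf₂ hab)
      have himg : g '' (G₂.neighborSet w.1) = H.neighborSet (f₂ w) := by
        ext c
        constructor
        · rintro ⟨w', hw', rfl⟩
          rw [SimpleGraph.mem_neighborSet] at hw'
          rw [SimpleGraph.mem_neighborSet]
          by_cases hz' : w' = z
          · subst hz'
            rw [hgz]
            by_cases hws : w.1 ∈ S
            · rw [if_pos hws]
              exact ((L3 x w).mpr ⟨hw'.symm, Or.inl ⟨rfl, hws⟩⟩).symm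
            · rw [if_neg hws]
              exact ((L3 y w).mpr ⟨hw'.symm, Or.inr ⟨rfl, hws⟩⟩).symm
          · rw [hgnz w' hz']
            exact (L2 w ⟨w', hz'⟩).mpr hw'
        · intro hc
          rw [SimpleGraph.mem_neighborSet] at hc
          rcases hmem c with ⟨a, rfl⟩ | ⟨w', rfl⟩
          · obtain ⟨hzw, hor⟩ := (L3 a w).mp hc.symm
            refine ⟨z, hzw.symm, ?_⟩
            rw [hgz]
            rcases hor with ⟨rfl, hws⟩ | ⟨rfl, hws⟩
            · rw [if_pos hws]
            · rw [if_neg hws]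
          · have h' := (L2 w w').mp hc
            exact ⟨w'.1, h', by rw [hgnz w'.1 w'.2]⟩
      show (H.neighborSet (f₂ w)).ncard = (G₂.neighborSet w.1).ncard
      rw [← himg, Set.ncard_image_of_injOn hinj]
    -- boundary transfer
    have L5 : ∀ A : Set V₂, z ∉ A →
        boundary H {c | ∃ w : {w : V₂ // w ≠ z}, w.1 ∈ A ∧ f₂ w = c} =
          {c | ∃ w : {w : V₂ // w ≠ z}, w.1 ∈ boundary G₂ A ∧ f₂ w = c} := by
      intro A hzA
      ext c
      constructor
      · rintro ⟨⟨w, hwA, rfl⟩, d, hdR, hAdj⟩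
        refine ⟨w, ⟨hwA, ?_⟩, rfl⟩
        rcases hmem d with ⟨a, rfl⟩ | ⟨w', rfl⟩
        · obtain ⟨hzw, _⟩ := (L3 a w).mp hAdj.symm
          exact ⟨z, hzA, hzw.symm⟩
        · have hA' := (L2 w w').mp hAdj
          exact ⟨w'.1, fun hw'A => hdR ⟨w', hw'A, rfl⟩, hA'⟩
      · rintro ⟨w, ⟨hwA, w', hw'A, hadj'⟩, rfl⟩
        refine ⟨⟨w, hwA, rfl⟩, ?_⟩
        by_cases hz' : w' = z
        · subst hz'
          by_cases hws : w.1 ∈ S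
          · refine ⟨f₁ x, ?_, ((L3 x w).mpr ⟨hadj'.symm, Or.inl ⟨rfl, hws⟩⟩).symm⟩
            rintro ⟨w'', _, h⟩
            exact hner x w'' h.symm
          · refine ⟨f₁ y, ?_, ((L3 y w).mpr ⟨hadj'.symm, Or.inr ⟨rfl, hws⟩⟩).symm⟩
            rintro ⟨w'', _, h⟩
            exact hner y w'' h.symm
        · refine ⟨f₂ ⟨w', hz'⟩, ?_, (L2 w ⟨w', hz'⟩).mpr hadj'⟩
          rintro ⟨w'', hw''A, h⟩
          obtain rfl := hf₂ h
          exact hw'A hw''A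
    rcases hmem v with ⟨a, rfl⟩ | ⟨w₀, rfl⟩
    · -- v on the G₁ side: use ih₂ at z and transfer
      rcases ih₂ z with ⟨R₂, hR₂, hzR₂⟩ | ⟨S₂, hS₂, hzS₂⟩
      · obtain ⟨hR₂univ, u₂, v₂, huv, hnadj, hbd, h5ore⟩ := hR₂
        have hu₂z : u₂.1 ≠ z := fun h => hzR₂ (h ▸ u₂.2)
        have hv₂z : v₂.1 ≠ z := fun h => hzR₂ (h ▸ v₂.2)
        set R : Set V := {c | ∃ w : {w : V₂ // w ≠ z}, w.1 ∈ R₂ ∧ f₂ w = c} with hRdef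
        have hnem : ∀ (r : ↥R₂), r.1 ≠ z := fun r h => hzR₂ (h ▸ r.2)
        set m : ↥R₂ → ↥R := fun r => ⟨f₂ ⟨r.1, hnem r⟩, ⟨⟨r.1, hnem r⟩, r.2, rfl⟩⟩ with hm
        have hminj : Function.Injective m := by
          intro r s h
          have h' := congrArg Subtype.val h
          exact Subtype.ext (congrArg (Subtype.val : {w : V₂ // w ≠ z} → V₂) (hf₂ h'))
        have hmsurj : Function.Surjective m := by
          rintro ⟨c, w, hwR, rfl⟩
          exact ⟨⟨w.1, hwR⟩, Subtype.ext (congrArg ⇑f₂ (Subtype.ext rfl))⟩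
        left
        refine ⟨R, ⟨?_, m u₂, m v₂, ?_, ?_, ?_, ?_⟩, ?_⟩
        · intro h
          have : f₁ x ∈ R := by rw [h]; exact Set.mem_univ _
          obtain ⟨w, _, hw⟩ := this
          exact hner x w hw.symm
        · intro h
          have : u₂.1 = v₂.1 := congrArg (Subtype.val : {w : V₂ // w ≠ z} → V₂) (hf₂ h)
          exact huv this
        · intro h
          exact hnadj ((L2 _ _).mp h)
        · rw [show boundary H R = _ from L5 R₂ hzR₂]
          ext c
          simp only [Set.mem_setOf_eq, Set.mem_insert_iff, Set.mem_singleton_iff, hbd]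
          constructor
          · rintro ⟨w, (h | h), rfl⟩
            · exact Or.inl (congrArg ⇑f₂ (Subtype.ext h))
            · exact Or.inr (congrArg ⇑f₂ (Subtype.ext h))
          · rintro (rfl | rfl)
            · exact ⟨⟨u₂.1, hu₂z⟩, Or.inl rfl, rfl⟩
            · exact ⟨⟨v₂.1, hv₂z⟩, Or.inr rfl, rfl⟩
        · refine is5Ore_of_iso h5ore ⟨Equiv.ofBijective m ⟨hminj, hmsurj⟩, ?_⟩
          intro r s
          show (addEdge (H.induce R) (m u₂) (m v₂)).Adj (m r) (m s) ↔
            (addEdge (G₂.induce R₂) u₂ v₂).Adj r s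
          simp only [addEdge, SimpleGraph.sup_adj, SimpleGraph.fromEdgeSet_adj,
            Set.mem_singleton_iff, SimpleGraph.comap_adj, Function.Embedding.coe_subtype,
            Sym2.eq_iff, ne_eq]
          constructor
          · rintro (h | ⟨(⟨h1, h2⟩ | ⟨h1, h2⟩), hne⟩)
            · exact Or.inl ((L2 _ _).mp h)
            · exact Or.inr ⟨Or.inl ⟨hminj h1, hminj h2⟩, fun h => hne (congrArg m h)⟩
            · exact Or.inr ⟨Or.inr ⟨hminj h1, hminj h2⟩, fun h => hne (congrArg m h)⟩
          · rintro (h | ⟨(⟨rfl, rfl⟩ | ⟨rfl, rfl⟩), hne⟩)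
            · exact Or.inl ((L2 _ _).mpr h)
            · exact Or.inr ⟨Or.inl ⟨rfl, rfl⟩, fun h => hne (hminj h)⟩
            · exact Or.inr ⟨Or.inr ⟨rfl, rfl⟩, fun h => hne (hminj h)⟩
        · rintro ⟨w, _, hw⟩
          exact hner a w hw.symm
      · -- emerald transfer
        obtain ⟨hcard, hclq, hdeg⟩ := hS₂
        right
        refine ⟨{c | ∃ w : {w : V₂ // w ≠ z}, w.1 ∈ S₂ ∧ f₂ w = c}, ⟨?_, ?_, ?_⟩, ?_⟩
        · have h1 : {c | ∃ w : {w : V₂ // w ≠ z}, w.1 ∈ S₂ ∧ f₂ w = c} =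
              ⇑f₂ '' {w : {w : V₂ // w ≠ z} | w.1 ∈ S₂} := rfl
          have h2 : Subtype.val '' {w : {w : V₂ // w ≠ z} | w.1 ∈ S₂} = S₂ := by
            ext a
            constructor
            · rintro ⟨w, hw, rfl⟩; exact hw
            · intro ha; exact ⟨⟨a, fun h => hzS₂ (h ▸ ha)⟩, ha, rfl⟩
          rw [h1, Set.ncard_image_of_injective _ hf₂,
            ← Set.ncard_image_of_injective _ (Subtype.val_injective), h2, hcard]
        · rintro c ⟨w, hw, rfl⟩ d ⟨w', hw', rfl⟩ hcd
          refine (L2 w w').mpr (hclq w.1 hw w'.1 hw' ?_)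
          intro h
          exact hcd (congrArg ⇑f₂ (Subtype.ext h))
        · rintro c ⟨w, hw, rfl⟩
          rw [L4 w]
          exact hdeg w.1 hw
        · rintro ⟨w, _, hw⟩
          exact hner a w hw.symm
    · -- v on the G₂ side: R = range f₁ is Ore-collapsible
      obtain ⟨s₀, hs₀⟩ := hSne
      have hzs₀ : G₂.Adj z s₀ := hS s₀ hs₀
      obtain ⟨t₀, ht₀N, ht₀S⟩ := hNS
      have hzt₀ : G₂.Adj z t₀ := ht₀N
      left
      refine ⟨Set.range ⇑f₁, ⟨?_, ⟨f₁ x, ⟨x, rfl⟩⟩, ⟨f₁ y, ⟨y, rfl⟩⟩, ?_, ?_, ?_, ?_⟩, ?_⟩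
      · intro h
        have : f₂ ⟨s₀, hzs₀.ne'⟩ ∈ Set.range ⇑f₁ := by rw [h]; exact Set.mem_univ _
        obtain ⟨a, ha⟩ := this
        exact hner a _ ha
      · exact fun h => hxy.ne (f₁.injective h)
      · intro h
        obtain ⟨_, h2, _⟩ := (L1 x y).mp h
        exact h2 ⟨rfl, rfl⟩
      · ext c
        simp only [boundary, Set.mem_setOf_eq, Set.mem_insert_iff, Set.mem_singleton_iff]
        constructor
        · rintro ⟨⟨a', rfl⟩, d, hd, hAdj⟩
          rcases hmem d with ⟨b, rfl⟩ | ⟨w', rfl⟩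
          · exact absurd ⟨b, rfl⟩ hd
          · rcases ((L3 a' w').mp hAdj).2 with ⟨rfl, _⟩ | ⟨rfl, _⟩
            · exact Or.inl rfl
            · exact Or.inr rfl
        · rintro (rfl | rfl)
          · refine ⟨⟨x, rfl⟩, f₂ ⟨s₀, hzs₀.ne'⟩, ?_, (L3 x _).mpr ⟨hzs₀, Or.inl ⟨rfl, hs₀⟩⟩⟩
            rintro ⟨a', ha'⟩
            exact hner a' _ ha'
          · refine ⟨⟨y, rfl⟩, f₂ ⟨t₀, hzt₀.ne'⟩, ?_, (L3 y _).mpr ⟨hzt₀, Or.inr ⟨rfl, ht₀S⟩⟩⟩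
            rintro ⟨a', ha'⟩
            exact hner a' _ ha'
      · refine is5Ore_of_iso h₁ ⟨Equiv.ofInjective ⇑f₁ f₁.injective, ?_⟩
        intro a' b'
        simp only [addEdge, SimpleGraph.sup_adj, SimpleGraph.fromEdgeSet_adj,
          Set.mem_singleton_iff, SimpleGraph.comap_adj, Function.Embedding.coe_subtype,
          Equiv.ofInjective_apply, Sym2.eq_iff, Subtype.mk.injEq, Subtype.ext_iff, ne_eq,
          EmbeddingLike.apply_eq_iff_eq, L1]
        constructor
        · rintro (⟨h, _, _⟩ | ⟨(⟨rfl, rfl⟩ | ⟨rfl, rfl⟩), _⟩)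
          · exact h
          · exact hxy
          · exact hxy.symm
        · intro hab
          by_cases hc1 : a' = x ∧ b' = y
          · exact Or.inr ⟨Or.inl hc1, hab.ne⟩
          · by_cases hc2 : a' = y ∧ b' = x
            · exact Or.inr ⟨Or.inr hc2, hab.ne⟩
            · exact Or.inl ⟨hab, hc1, hc2⟩
      · rintro ⟨a', ha'⟩
        exact hner a' w₀ ha'


/-- If `H` is 5-Ore and `v ∈ V(H)`, then there exists either an Ore-collapsible subset of `H`
not containing `v` or an emerald of `H` not containing `v`. -/
theorem stmt_4 {V : Type} [Fintype V] (H : SimpleGraph V) (h5 : Is5Ore H) (v : V) :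
    (∃ R : Set V, OreCollapsible H R ∧ v ∉ R) ∨
    (∃ S : Set V, IsEmerald H S ∧ v ∉ S) := by
  exact stmt4_aux h5 v

end Postle
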